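/- Let u : ℝ → ℂ be continuous, 2π-periodic and continuously differentiable, and define U(r e^{iθ}) = (1/2π) ∫_{-π}^{π} u(t) P_r(θ - t) dt. Then dU/dθ(r e^{iθ}) → u'(θ) uniformly in θ ∈ ℝ as r → 1⁻. -/

import Mathlib

open Complex Real MeasureTheory

noncomputable def poissonKernel' (r θ : ℝ) : ℝ :=
  (1 - r ^ 2) / (1 + r ^ 2 - 2 * r * Real.cos θ)

lemma denom_pos {r : ℝ} (hr0 : 0 ≤ r) (hr1 : r < 1) (θ : ℝ) :
    0 < 1 + r ^ 2 - 2 * r * Real.cos θ := by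
  nlinarith [Real.cos_le_one θ, Real.neg_one_le_cos θ, sq_nonneg (1 - r), sq_nonneg (1 + r)]

lemma pk_nonneg {r : ℝ} (hr0 : 0 ≤ r) (hr1 : r < 1) (θ : ℝ) : 0 ≤ poissonKernel' r θ := by
  apply div_nonneg (by nlinarith) (denom_pos hr0 hr1 θ).le

lemma pk_continuous {r : ℝ} (hr0 : 0 ≤ r) (hr1 : r < 1) :
    Continuous (fun θ => poissonKernel' r θ) := by
  apply Continuous.div continuous_const (by fun_prop)
  exact fun θ => (denom_pos hr0 hr1 θ).ne'

lemma one_sub_ne {r : ℝ} (hr0 : 0 ≤ r) (hr1 : r < 1) (θ : ℝ) :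
    (1 : ℂ) - (r : ℂ) * Complex.exp (θ * I) ≠ 0 := by
  intro h
  have h1 : ‖(r : ℂ) * Complex.exp (θ * I)‖ = 1 := by
    rw [show (r:ℂ) * Complex.exp (θ*I) = 1 by linear_combination -h]; simp
  rw [norm_mul, Complex.norm_exp] at h1
  rw [show ((θ : ℂ) * I).re = 0 by simp] at h1
  simp [_root_.abs_of_nonneg hr0] at h1
  linarith [h1 ▸ hr1]

lemma key_integral {r : ℝ} (hr0 : 0 < r) (hr1 : r < 1) :
    ∫ θ in (0:ℝ)..(2*π), (1 - (r : ℂ) * Complex.exp (θ * I))⁻¹ = 2 * π := by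
  have hf : DifferentiableOn ℂ (fun z : ℂ => (1 - z)⁻¹) (Metric.closedBall 0 r) := by
    apply DifferentiableOn.inv (by fun_prop)
    intro z hz
    simp only [Metric.mem_closedBall, Complex.dist_eq, sub_zero] at hz
    intro h
    have hz1 : z = 1 := by linear_combination -h
    rw [hz1] at hz; simp at hz; linarith
  have hw : (0 : ℂ) ∈ Metric.ball (0 : ℂ) r := by simpa using hr0
  have key := hf.circleIntegral_sub_inv_smul hw
  simp only [sub_zero, circleIntegral, deriv_circleMap, smul_eq_mul] at key
  rw [show ((1:ℂ))⁻¹ = 1 by simp, mul_one] at key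
  have heq : ∀ θ ∈ Set.uIcc (0:ℝ) (2*π), circleMap 0 r θ * I * ((circleMap 0 r θ)⁻¹ * (1 - circleMap 0 r θ)⁻¹)
      = I * (1 - (r:ℂ) * Complex.exp (θ * I))⁻¹ := by
    intro θ _
    have hne : circleMap 0 r θ ≠ 0 := circleMap_ne_center hr0.ne'
    rw [mul_comm (circleMap 0 r θ) I, mul_assoc, mul_inv_cancel_left₀ hne]
    simp [circleMap]
  rw [intervalIntegral.integral_congr heq, intervalIntegral.integral_const_mul] at key
  have : (2 * (π:ℂ) * I) = I * (2 * π) := by ring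
  rw [this] at key
  exact mul_left_cancel₀ I_ne_zero key

lemma pk_periodic (r : ℝ) : Function.Periodic (poissonKernel' r) (2 * π) := by
  intro θ; simp [poissonKernel', Real.cos_add_two_pi]

lemma pk_eq_re {r : ℝ} (hr0 : 0 ≤ r) (hr1 : r < 1) (θ : ℝ) :
    poissonKernel' r θ = 2 * ((1 - (r:ℂ) * Complex.exp (θ * I))⁻¹).re - 1 := by
  have hz : ((1:ℂ) - (r:ℂ) * Complex.exp (θ * I)).re = 1 - r * Real.cos θ := by
    simp [Complex.exp_ofReal_mul_I_re]
  have hzi : ((1:ℂ) - (r:ℂ) * Complex.exp (θ * I)).im = -(r * Real.sin θ) := by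
    simp [Complex.exp_ofReal_mul_I_im]
  have hD : Complex.normSq ((1:ℂ) - (r:ℂ) * Complex.exp (θ * I))
      = 1 + r ^ 2 - 2 * r * Real.cos θ := by
    rw [Complex.normSq_apply, hz, hzi]
    nlinarith [Real.sin_sq_add_cos_sq θ]
  rw [Complex.inv_re, hz, hD, poissonKernel']
  have hd := denom_pos hr0 hr1 θ
  rw [mul_div_assoc', div_sub_one hd.ne']
  congr 1
  ring

lemma pk_le {r δ θ : ℝ} (hr0 : 0 ≤ r) (hr1 : r < 1) (hδ : 0 < δ) (hδπ : δ ≤ π)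
    (h1 : δ ≤ |θ|) (h2 : |θ| ≤ π) :
    poissonKernel' r θ ≤ (1 - r ^ 2) / (1 + r ^ 2 - 2 * r * Real.cos δ) := by
  have hc : Real.cos θ ≤ Real.cos δ := by
    rw [← Real.cos_abs θ]
    exact Real.cos_le_cos_of_nonneg_of_le_pi hδ.le h2 h1
  have hd : 0 < 1 + r ^ 2 - 2 * r * Real.cos δ := denom_pos hr0 hr1 δ
  apply div_le_div_of_nonneg_left (by nlinarith) hd (by nlinarith)

lemma B_tendsto {δ : ℝ} (hδ : 0 < δ) (hδπ : δ ≤ π) :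
    Filter.Tendsto (fun r : ℝ => (1 - r ^ 2) / (1 + r ^ 2 - 2 * r * Real.cos δ))
      (nhdsWithin 1 (Set.Iio 1)) (nhds 0) := by
  have hc : Real.cos δ < 1 := by
    rcases lt_or_eq_of_le (Real.cos_le_one δ) with h | h
    · exact h
    · exfalso
      have := (Real.cos_eq_one_iff_of_lt_of_lt (x := δ) (by nlinarith [Real.pi_pos])
        (by nlinarith [Real.pi_pos])).mp h
      linarith
  have h0 : (fun r : ℝ => (1 - r ^ 2) / (1 + r ^ 2 - 2 * r * Real.cos δ))
      1 = 0 := by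
    simp
  rw [← h0]
  apply Filter.Tendsto.mono_left _ nhdsWithin_le_nhds
  apply ContinuousAt.tendsto
  apply ContinuousAt.div (by fun_prop) (by fun_prop)
  nlinarith

lemma periodic_uniformContinuous {f : ℝ → ℂ} (hc : Continuous f)
    (hp : Function.Periodic f (2 * π)) : UniformContinuous f := by
  rw [Metric.uniformContinuous_iff]
  intro ε hε
  have hπ := Real.pi_pos
  have huc : UniformContinuousOn f (Set.Icc (-1 : ℝ) (2 * π + 1)) :=
    isCompact_Icc.uniformContinuousOn_of_continuous hc.continuousOn
  rw [Metric.uniformContinuousOn_iff] at huc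
  obtain ⟨δ, hδ, hδ'⟩ := huc ε hε
  refine ⟨min δ 1, by positivity, ?_⟩
  intro x y hxy
  rw [Real.dist_eq] at hxy
  set k : ℤ := ⌊x / (2 * π)⌋ with hk
  have h1 : (k : ℝ) ≤ x / (2 * π) := Int.floor_le _
  have h2 : x / (2 * π) < k + 1 := Int.lt_floor_add_one _
  have h1' : (k : ℝ) * (2 * π) ≤ x := by
    rw [← le_div_iff₀ (by positivity)]; exact h1
  have h2' : x < ((k : ℝ) + 1) * (2 * π) := by
    rw [← div_lt_iff₀ (by positivity)]; exact h2
  have hx' : x - k * (2 * π) ∈ Set.Icc (-1 : ℝ) (2 * π + 1) := by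
    constructor <;> nlinarith
  have hy' : y - k * (2 * π) ∈ Set.Icc (-1 : ℝ) (2 * π + 1) := by
    have h3 : |x - y| ≤ 1 := le_trans hxy.le (min_le_right _ _)
    rw [abs_le] at h3
    constructor <;> nlinarith
  have := hδ' _ hx' _ hy' (by
    rw [Real.dist_eq]
    have : x - k * (2 * π) - (y - k * (2 * π)) = x - y := by ring
    rw [this]
    exact lt_of_lt_of_le hxy (min_le_left _ _))
  rwa [hp.sub_int_mul_eq k, hp.sub_int_mul_eq k] at this

lemma pk_integral {r : ℝ} (hr0 : 0 ≤ r) (hr1 : r < 1) :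
    ∫ θ in (-π)..π, poissonKernel' r θ = 2 * π := by
  have hπ := Real.pi_pos
  have hshift : ∫ θ in (-π)..π, poissonKernel' r θ
      = ∫ θ in (0:ℝ)..(2*π), poissonKernel' r θ := by
    have h := (pk_periodic r).intervalIntegral_add_eq (-π) 0
    rw [show -π + 2*π = π by ring, zero_add] at h
    exact h
  rcases eq_or_lt_of_le hr0 with h | hr0'
  · rw [hshift, ← h]
    simp [poissonKernel']
  rw [hshift]
  have hw : Continuous (fun θ : ℝ => (1 - (r:ℂ) * Complex.exp (θ * I))⁻¹) := by
    apply Continuous.inv₀ (by fun_prop) (fun θ => one_sub_ne hr0 hr1 θ)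
  have hint : IntervalIntegrable (fun θ : ℝ => (1 - (r:ℂ) * Complex.exp (θ * I))⁻¹)
      volume 0 (2*π) := hw.intervalIntegrable _ _
  have hre : ∫ θ in (0:ℝ)..(2*π), ((1 - (r:ℂ) * Complex.exp (θ * I))⁻¹).re
      = ((∫ θ in (0:ℝ)..(2*π), (1 - (r:ℂ) * Complex.exp (θ * I))⁻¹)).re := by
    have := Complex.reCLM.intervalIntegral_comp_comm hint
    simpa using this
  have h2 : Continuous fun θ : ℝ => 2 * ((1 - (r:ℂ) * Complex.exp (θ * I))⁻¹).re :=
    continuous_const.mul (Complex.continuous_re.comp hw)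
  calc ∫ θ in (0:ℝ)..(2*π), poissonKernel' r θ
      = ∫ θ in (0:ℝ)..(2*π), (2 * ((1 - (r:ℂ) * Complex.exp (θ * I))⁻¹).re - 1) :=
        intervalIntegral.integral_congr (fun θ _ => pk_eq_re hr0 hr1 θ)
    _ = 2 * (∫ θ in (0:ℝ)..(2*π), ((1 - (r:ℂ) * Complex.exp (θ * I))⁻¹).re) - (2*π - 0) * 1 := by
        rw [intervalIntegral.integral_sub (h2.intervalIntegrable _ _)
          intervalIntegrable_const, intervalIntegral.integral_const_mul,
          intervalIntegral.integral_const]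
        simp
    _ = 2 * π := by
        rw [hre, key_integral hr0' hr1]
        simp
        ring

lemma main_est {f : ℝ → ℂ} (hfc : Continuous f) (hfper : Function.Periodic f (2 * π))
    {r δ M ε : ℝ} (hr0 : 0 < r) (hr1 : r < 1) (hδ0 : 0 < δ) (hδπ : δ ≤ π)
    (hM : ∀ x, ‖f x‖ ≤ M)
    (hmod : ∀ x y : ℝ, |x - y| ≤ δ → ‖f x - f y‖ ≤ ε) (hε : 0 ≤ ε) (θ : ℝ) :
    ‖(1 / (2 * π)) * (∫ t in (-π)..π, f t * (poissonKernel' r (θ - t) : ℂ)) - f θ‖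
      ≤ ε + 2 * M * ((1 - r ^ 2) / (1 + r ^ 2 - 2 * r * Real.cos δ)) := by
  have hπ := Real.pi_pos
  have hM0 : 0 ≤ M := le_trans (norm_nonneg _) (hM 0)
  set B := (1 - r ^ 2) / (1 + r ^ 2 - 2 * r * Real.cos δ) with hB
  have hB0 : 0 ≤ B := div_nonneg (by nlinarith) (denom_pos hr0.le hr1 δ).le
  set g : ℝ → ℂ := fun s => f (θ - s) * (poissonKernel' r s : ℂ) with hg
  have hgc : Continuous g := by
    apply Continuous.mul (hfc.comp (by fun_prop))
    exact Complex.continuous_ofReal.comp (pk_continuous hr0.le hr1)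
  have hgper : Function.Periodic g (2 * π) := by
    intro s
    simp only [hg]
    rw [show θ - (s + 2*π) = (θ - s) - 2*π by ring, hfper.sub_eq, pk_periodic r s]
  have step1 : ∫ t in (-π)..π, f t * (poissonKernel' r (θ - t) : ℂ) = ∫ s in (-π)..π, g s := by
    have h1 : ∀ t ∈ Set.uIcc (-π) π, f t * (poissonKernel' r (θ - t) : ℂ) = g (θ - t) := by
      intro t _; simp only [hg]; rw [show θ - (θ - t) = t by ring]
    rw [intervalIntegral.integral_congr h1, intervalIntegral.integral_comp_sub_left g θ]
    have h := hgper.intervalIntegral_add_eq (θ - π) (-π)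
    rw [show θ - π + 2*π = θ - -π by ring, show -π + 2*π = π by ring] at h
    exact h
  have hfθP : Continuous fun s : ℝ => f θ * (poissonKernel' r s : ℂ) :=
    continuous_const.mul (Complex.continuous_ofReal.comp (pk_continuous hr0.le hr1))
  have step2 : f θ = (1 / (2 * π)) * ∫ s in (-π)..π, f θ * (poissonKernel' r s : ℂ) := by
    rw [intervalIntegral.integral_const_mul, intervalIntegral.integral_ofReal,
        pk_integral hr0.le hr1]
    have h2π : ((2*π : ℝ) : ℂ) ≠ 0 := by
      simp [Real.pi_ne_zero]
    push_cast at h2π ⊢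
    field_simp
  have step3 : (1 / (2 * π)) * (∫ t in (-π)..π, f t * (poissonKernel' r (θ - t) : ℂ)) - f θ
      = (1 / (2 * π)) * ∫ s in (-π)..π, (f (θ - s) - f θ) * (poissonKernel' r s : ℂ) := by
    rw [step1]
    conv_lhs => rw [step2]
    rw [← mul_sub, ← intervalIntegral.integral_sub (hgc.intervalIntegrable _ _)
      (hfθP.intervalIntegrable _ _)]
    congr 1
    apply intervalIntegral.integral_congr
    intro s _
    simp only [hg]
    ring
  rw [step3]
  set φ : ℝ → ℝ := fun s => ‖f (θ - s) - f θ‖ * poissonKernel' r s with hφ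
  have hφc : Continuous φ := by
    apply Continuous.mul _ (pk_continuous hr0.le hr1)
    exact ((hfc.comp (by fun_prop : Continuous fun s : ℝ => θ - s)).sub continuous_const).norm
  have hφint : ∀ a b : ℝ, IntervalIntegrable φ volume a b := fun a b =>
    hφc.intervalIntegrable a b
  have hPint : ∀ a b : ℝ, IntervalIntegrable (poissonKernel' r) volume a b := fun a b =>
    (pk_continuous hr0.le hr1).intervalIntegrable a b
  have hnorm : ∀ s ∈ Set.uIcc (-π) π, ‖(f (θ - s) - f θ) * (poissonKernel' r s : ℂ)‖ = φ s := by
    intro s _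
    rw [norm_mul, Complex.norm_real, Real.norm_eq_abs, _root_.abs_of_nonneg (pk_nonneg hr0.le hr1 s)]
  -- middle bound
  have hmid : ∫ s in (-δ)..δ, φ s ≤ ε * (2*π) := by
    calc ∫ s in (-δ)..δ, φ s ≤ ∫ s in (-δ)..δ, ε * poissonKernel' r s := by
          apply intervalIntegral.integral_mono_on (by linarith) (hφint _ _)
            ((continuous_const.mul (pk_continuous hr0.le hr1)).intervalIntegrable _ _)
          intro s hs
          apply mul_le_mul_of_nonneg_right _ (pk_nonneg hr0.le hr1 s)
          apply hmod
          rw [show θ - s - θ = -s by ring, abs_neg, abs_le]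
          exact ⟨hs.1, hs.2⟩
      _ = ε * ∫ s in (-δ)..δ, poissonKernel' r s := intervalIntegral.integral_const_mul _ _
      _ ≤ ε * (2*π) := by
          apply mul_le_mul_of_nonneg_left _ hε
          have hP1 := intervalIntegral.integral_add_adjacent_intervals
            (hPint (-π) (-δ)) (hPint (-δ) δ)
          have hP2 := intervalIntegral.integral_add_adjacent_intervals
            (hPint (-π) δ) (hPint δ π)
          have hn1 : 0 ≤ ∫ s in (-π)..(-δ), poissonKernel' r s :=
            intervalIntegral.integral_nonneg (by linarith) (fun s _ => pk_nonneg hr0.le hr1 s)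
          have hn2 : 0 ≤ ∫ s in δ..π, poissonKernel' r s :=
            intervalIntegral.integral_nonneg (by linarith) (fun s _ => pk_nonneg hr0.le hr1 s)
          have h2π := pk_integral hr0.le hr1 (r := r)
          linarith
  have hφbound : ∀ s : ℝ, δ ≤ |s| → |s| ≤ π → φ s ≤ 2 * M * B := by
    intro s h1 h2
    have hf2 : ‖f (θ - s) - f θ‖ ≤ 2 * M :=
      le_trans (norm_sub_le _ _) (by linarith [hM (θ - s), hM θ])
    calc φ s ≤ (2 * M) * B :=
      mul_le_mul hf2 (pk_le hr0.le hr1 hδ0 hδπ h1 h2) (pk_nonneg hr0.le hr1 s) (by positivity)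
      _ = 2 * M * B := by ring
  have hedge1 : ∫ s in (-π)..(-δ), φ s ≤ 2 * M * B * π := by
    calc ∫ s in (-π)..(-δ), φ s ≤ ∫ _s in (-π)..(-δ), (2 * M * B) := by
          apply intervalIntegral.integral_mono_on (by linarith) (hφint _ _)
            intervalIntegrable_const
          intro s hs
          apply hφbound s
          · rw [_root_.abs_of_nonpos (by linarith [hs.2])]; linarith [hs.2]
          · rw [_root_.abs_of_nonpos (by linarith [hs.2])]; linarith [hs.1]
      _ = (-δ - -π) * (2 * M * B) := by rw [intervalIntegral.integral_const]; simp
      _ ≤ 2 * M * B * π := by nlinarith [mul_nonneg (mul_nonneg (by linarith : (0:ℝ) ≤ 2*M) hB0) hδ0.le]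
  have hedge2 : ∫ s in δ..π, φ s ≤ 2 * M * B * π := by
    calc ∫ s in δ..π, φ s ≤ ∫ _s in δ..π, (2 * M * B) := by
          apply intervalIntegral.integral_mono_on (by linarith) (hφint _ _)
            intervalIntegrable_const
          intro s hs
          apply hφbound s
          · rw [_root_.abs_of_nonneg (by linarith [hs.1])]; exact hs.1
          · rw [_root_.abs_of_nonneg (by linarith [hs.1])]; exact hs.2
      _ = (π - δ) * (2 * M * B) := by rw [intervalIntegral.integral_const]; simp
      _ ≤ 2 * M * B * π := by nlinarith [mul_nonneg (mul_nonneg (by linarith : (0:ℝ) ≤ 2*M) hB0) hδ0.le]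
  have hsplit1 := intervalIntegral.integral_add_adjacent_intervals
    (hφint (-π) (-δ)) (hφint (-δ) δ)
  have hsplit2 := intervalIntegral.integral_add_adjacent_intervals
    (hφint (-π) δ) (hφint δ π)
  have htot : ∫ s in (-π)..π, φ s ≤ ε * (2*π) + 2 * M * B * π + 2 * M * B * π := by
    linarith
  have hnormint : ‖∫ s in (-π)..π, (f (θ - s) - f θ) * (poissonKernel' r s : ℂ)‖
      ≤ ∫ s in (-π)..π, φ s := by
    refine le_trans (intervalIntegral.norm_integral_le_integral_norm (by linarith)) ?_
    rw [intervalIntegral.integral_congr hnorm]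
  rw [norm_mul]
  have hcoe : ((1:ℂ) / (2 * (π:ℝ))) = ((1 / (2*π) : ℝ) : ℂ) := by push_cast; ring
  rw [hcoe, Complex.norm_real, Real.norm_eq_abs, _root_.abs_of_nonneg (by positivity)]
  calc (1 / (2*π)) * ‖∫ s in (-π)..π, (f (θ - s) - f θ) * (poissonKernel' r s : ℂ)‖
      ≤ (1 / (2*π)) * (ε * (2*π) + 2 * M * B * π + 2 * M * B * π) := by
        apply mul_le_mul_of_nonneg_left _ (by positivity)
        linarith
    _ = ε + 2 * M * B := by field_simp; ring

theorem stmt1 (u : ℝ → ℂ) (hu : Continuous u)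
    (hper : ∀ t, u (t + 2 * π) = u t) (hu1 : ContDiff ℝ 1 u)
    (dU : ℝ → ℝ → ℂ)
    (hdU : ∀ r θ, dU r θ =
      (1 / (2 * π)) * ∫ t in (-π)..π, deriv u t * (poissonKernel' r (θ - t) : ℂ)) :
    TendstoUniformly dU (deriv u) (nhdsWithin 1 (Set.Iio 1)) := by
  have hπ := Real.pi_pos
  set f := deriv u with hfdef
  have hfc : Continuous f := hu1.continuous_deriv le_rfl
  have hfper : Function.Periodic f (2 * π) := by
    intro t
    calc deriv u (t + 2 * π) = deriv (fun x => u (x + 2 * π)) t :=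
          (deriv_comp_add_const u (2 * π) t).symm
      _ = deriv u t := by congr 1; funext x; exact hper x
  have hufc := periodic_uniformContinuous hfc hfper
  obtain ⟨M, hMr⟩ := isBounded_iff_forall_norm_le.mp
    (hfper.isBounded_of_continuous (by positivity) hfc)
  have hM : ∀ x, ‖f x‖ ≤ M := fun x => hMr _ (Set.mem_range_self x)
  have hM0 : 0 ≤ M := le_trans (norm_nonneg _) (hM 0)
  rw [Metric.tendstoUniformly_iff]
  intro ε hε
  rw [Metric.uniformContinuous_iff] at hufc
  obtain ⟨δ₀, hδ₀, hδmod⟩ := hufc (ε/4) (by positivity)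
  set δ := min (δ₀/2) π with hδdef
  have hδ0 : 0 < δ := lt_min (by linarith) hπ
  have hδπ : δ ≤ π := min_le_right _ _
  have hmod : ∀ x y : ℝ, |x - y| ≤ δ → ‖f x - f y‖ ≤ ε/4 := by
    intro x y h
    have hd : dist x y < δ₀ := by
      rw [Real.dist_eq]
      calc |x - y| ≤ δ := h
        _ ≤ δ₀/2 := min_le_left _ _
        _ < δ₀ := by linarith
    have := hδmod hd
    rw [dist_eq_norm] at this
    linarith
  have hev1 : ∀ᶠ r in nhdsWithin 1 (Set.Iio 1),
      (1 - r ^ 2) / (1 + r ^ 2 - 2 * r * Real.cos δ) < ε / (8 * (M + 1)) := by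
    apply (B_tendsto hδ0 hδπ).eventually_lt_const
    positivity
  have hev2 : Set.Ioo (0:ℝ) 1 ∈ nhdsWithin 1 (Set.Iio 1) :=
    Ioo_mem_nhdsLT_of_mem (by constructor <;> norm_num)
  filter_upwards [hev1, hev2] with r hBr hr
  intro θ
  rw [dist_eq_norm, norm_sub_rev, hdU]
  have est := main_est hfc hfper hr.1 hr.2 hδ0 hδπ hM hmod (by positivity) θ
  have hBnn : 0 ≤ (1 - r ^ 2) / (1 + r ^ 2 - 2 * r * Real.cos δ) :=
    div_nonneg (by nlinarith [hr.2, hr.1]) (denom_pos hr.1.le hr.2 δ).le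
  refine lt_of_le_of_lt est ?_
  have hM1 : (0:ℝ) < M + 1 := by linarith
  have h1 : 2 * M * ((1 - r ^ 2) / (1 + r ^ 2 - 2 * r * Real.cos δ))
      ≤ 2 * M * (ε / (8 * (M + 1))) :=
    mul_le_mul_of_nonneg_left hBr.le (by linarith)
  have h2 : 2 * M * (ε / (8 * (M + 1))) ≤ ε / 4 := by
    rw [← mul_div_assoc, div_le_div_iff₀ (by positivity) (by norm_num)]
    nlinarith
  linarith
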